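/- Let U ⊆ ℂᵏ be a connected open neighborhood of the origin 0, and let G be a (not necessarily finitely generated) subgroup of the group of permutations of U all of whose elements are holomorphic and fix the origin (g(0) = 0 for all g ∈ G). Assume there is ℓ ≥ 1 such that every G-orbit in U is finite of cardinality at most ℓ. Then G is a finite group. -/

import Mathlib

open scoped Classical

open Filter Set Topology

/-- Pigeonhole for filters: if eventually some index in a finite set works, then some
fixed index works frequently. -/
lemma exists_frequently_of_eventually_exists {ι α : Type*} {l : Filter α} [l.NeBot]
    (s : Finset ι) {Q : ι → α → Prop}
    (h : ∀ᶠ t in l, ∃ i ∈ s, Q i t) : ∃ i ∈ s, ∃ᶠ t in l, Q i t := by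
  by_contra hc
  push_neg at hc
  have h2 : ∀ᶠ t in l, ∀ i ∈ s, ¬ Q i t := by
    rw [Filter.eventually_all_finset]
    exact fun i hi => hc i hi
  rcases (h.and h2).exists with ⟨t, ⟨i, hi, hq⟩, hall⟩
  exact hall i hi hq

/-- A (not necessarily finitely generated) group of holomorphic permutations of a
connected open neighborhood `U ⊆ ℂᵏ` of the origin, all of whose elements fix the
origin, with all orbits finite of uniformly bounded cardinality `≤ ℓ`, is finite. -/
theorem finite_of_uniformly_bounded_orbits_fixing_origin
    {k : ℕ} (hk : 1 ≤ k) (U : Set (Fin k → ℂ)) (hUo : IsOpen U) (hUc : IsConnected U)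
    (h0 : (0 : Fin k → ℂ) ∈ U)
    (G : Subgroup (Equiv.Perm U))
    (hhol : ∀ g ∈ G, ∀ x ∈ U, AnalyticAt ℂ
      (fun y => if h : y ∈ U then ((g ⟨y, h⟩ : U) : Fin k → ℂ) else y) x)
    (hfix : ∀ g ∈ G, g ⟨0, h0⟩ = ⟨0, h0⟩)
    (ℓ : ℕ) (hℓ : 1 ≤ ℓ)
    (horb : ∀ x : U, (MulAction.orbit G x).encard ≤ (ℓ : ℕ∞)) :
    Finite G := by
  classical
  -- the holomorphic extension of `g` to `ℂᵏ`
  let Fm : G → (Fin k → ℂ) → (Fin k → ℂ) :=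
    fun g y => if h : y ∈ U then (((g : Equiv.Perm U) ⟨y, h⟩ : U) : Fin k → ℂ) else y
  have hAn : ∀ (g : G), ∀ x ∈ U, AnalyticAt ℂ (Fm g) x := fun g x hx => hhol g g.2 x hx
  have hFval : ∀ (g : G) (y : Fin k → ℂ) (hy : y ∈ U),
      Fm g y = (((g : Equiv.Perm U) ⟨y, hy⟩ : U) : Fin k → ℂ) := fun g y hy => dif_pos hy
  have hF0 : ∀ g : G, Fm g 0 = 0 := by
    intro g
    rw [hFval g 0 h0, hfix g g.2]
  have hFone : ∀ y, Fm (1 : G) y = y := by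
    intro y; by_cases hy : y ∈ U
    · rw [hFval _ y hy]; rfl
    · exact dif_neg hy
  have hFcomp : ∀ (g h : G), ∀ y, ∀ hy : y ∈ U, Fm (g * h) y = Fm g (Fm h y) := by
    intro g h y hy
    rw [hFval h y hy, hFval (g * h) y hy, hFval g _ (Subtype.coe_prop _)]
    simp [Equiv.Perm.mul_apply]
  -- derivative at the origin
  let D : G → ((Fin k → ℂ) →L[ℂ] (Fin k → ℂ)) := fun g => fderiv ℂ (Fm g) 0
  have hDer : ∀ g : G, HasFDerivAt (Fm g) (D g) 0 :=
    fun g => (hAn g 0 h0).differentiableAt.hasFDerivAt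
  have hUnhds : U ∈ 𝓝 (0 : Fin k → ℂ) := hUo.mem_nhds h0
  have hDmul : ∀ g h : G, D (g * h) = (D g).comp (D h) := by
    intro g h
    have hev : Fm (g * h) =ᶠ[𝓝 0] (Fm g ∘ Fm h) :=
      Filter.eventuallyEq_of_mem hUnhds (fun y hy => hFcomp g h y hy)
    have h2 : DifferentiableAt ℂ (Fm g) (Fm h 0) := by
      rw [hF0 h]; exact (hAn g 0 h0).differentiableAt
    have h3 := fderiv_comp (𝕜 := ℂ) 0 h2 (hAn h 0 h0).differentiableAt
    show fderiv ℂ (Fm (g * h)) 0 = _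
    rw [hev.fderiv_eq, h3, hF0 h]
  have hDone : D 1 = ContinuousLinearMap.id ℂ _ := by
    show fderiv ℂ (Fm 1) 0 = _
    rw [funext hFone, fderiv_id']
  -- pigeonhole on an orbit
  have hpigeon : ∀ (x : U) {α : Type} [DecidableEq α] (s : Finset α), ℓ < s.card →
      ∀ u : α → G, ∃ a ∈ s, ∃ b ∈ s, a ≠ b ∧
        (u a : Equiv.Perm U) x = (u b : Equiv.Perm U) x := by
    intro x α _ s hcard u
    have hfin : (MulAction.orbit G x).Finite := Set.finite_of_encard_le_coe (horb x)
    have hocard : hfin.toFinset.card ≤ ℓ := by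
      have h1 := horb x
      rw [hfin.encard_eq_coe_toFinset_card] at h1
      exact_mod_cast h1
    have hmaps : ∀ a ∈ s, ((u a : Equiv.Perm U) x) ∈ hfin.toFinset := by
      intro a _
      rw [Set.Finite.mem_toFinset]
      exact MulAction.mem_orbit x (u a)
    exact Finset.exists_ne_map_eq_of_card_lt_of_maps_to (lt_of_le_of_lt hocard hcard) hmaps
  -- every element has order dividing ℓ!
  have hord : ∀ (g : G) (x : U), ((g : Equiv.Perm U) ^ Nat.factorial ℓ) x = x := by
    intro g x
    set p := (g : Equiv.Perm U) with hp
    have main : ∀ (y : U) (d : ℕ), 0 < d → d ≤ ℓ → (p ^ d) y = y →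
        (p ^ Nat.factorial ℓ) y = y := by
      intro y d hd hdl hfixd
      obtain ⟨c, hc⟩ : d ∣ Nat.factorial ℓ := Nat.dvd_factorial hd hdl
      have hiter : ∀ c : ℕ, ((p ^ d) ^ c) y = y := by
        intro c
        induction c with
        | zero => simp
        | succ n ih => rw [pow_succ', Equiv.Perm.mul_apply, ih, hfixd]
      rw [hc, pow_mul]
      exact hiter c
    have hcase : ∀ i j : ℕ, i < j → j ≤ ℓ →
        (p ^ i) x = (p ^ j) x → (p ^ Nat.factorial ℓ) x = x := by
      intro i j hlt hjl he
      have hdj : (j - i) + i = j := Nat.sub_add_cancel hlt.le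
      have hy : (p ^ (j - i)) ((p ^ i) x) = (p ^ i) x := by
        rw [← Equiv.Perm.mul_apply, ← pow_add, hdj, ← he]
      have hfixy := main _ _ (Nat.sub_pos_of_lt hlt)
        (le_trans (Nat.sub_le _ _) hjl) hy
      have hcalc : (p ^ i) ((p ^ Nat.factorial ℓ) x) = (p ^ i) x := by
        calc (p ^ i) ((p ^ Nat.factorial ℓ) x) = (p ^ (i + Nat.factorial ℓ)) x := by
              rw [pow_add, Equiv.Perm.mul_apply]
          _ = (p ^ (Nat.factorial ℓ + i)) x := by rw [add_comm]
          _ = (p ^ Nat.factorial ℓ) ((p ^ i) x) := by rw [pow_add, Equiv.Perm.mul_apply]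
          _ = (p ^ i) x := hfixy
      exact (Equiv.injective _) hcalc
    obtain ⟨i, hi, j, hj, hij, he⟩ :=
      hpigeon x (Finset.range (ℓ + 1)) (by simpa using Nat.lt_succ_self ℓ) (fun n => g ^ n)
    rw [SubgroupClass.coe_pow, SubgroupClass.coe_pow, ← hp] at he
    rcases hij.lt_or_gt with hlt | hlt
    · exact hcase i j hlt (Nat.lt_succ_iff.mp (Finset.mem_range.mp hj)) he
    · exact hcase j i hlt (Nat.lt_succ_iff.mp (Finset.mem_range.mp hi)) he.symm
  -- kernel of the derivative map is trivial
  have hker : ∀ e : G, D e = ContinuousLinearMap.id ℂ _ → e = 1 := by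
    intro e hDe
    set N := Nat.factorial ℓ with hNdef
    have hNpos : 0 < N := Nat.factorial_pos ℓ
    have hDpow : ∀ j : ℕ, D (e ^ j) = ContinuousLinearMap.id ℂ _ := by
      intro j; induction j with
      | zero => simpa using hDone
      | succ n ih => rw [pow_succ, hDmul, ih, hDe, ContinuousLinearMap.id_comp]
    -- the averaged map
    set havg : (Fin k → ℂ) → (Fin k → ℂ) :=
      fun y => (N : ℂ)⁻¹ • ∑ j ∈ Finset.range N, Fm (e ^ j) y with havgdef
    have hstrict : ∀ j : ℕ, HasStrictFDerivAt (Fm (e ^ j))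
        (ContinuousLinearMap.id ℂ (Fin k → ℂ)) 0 := by
      intro j
      have h1 := (hAn (e ^ j) 0 h0).hasStrictFDerivAt
      rwa [show fderiv ℂ (Fm (e ^ j)) 0 = D (e ^ j) from rfl, hDpow j] at h1
    have havgstrict : HasStrictFDerivAt havg
        (↑(ContinuousLinearEquiv.refl ℂ (Fin k → ℂ)) : (Fin k → ℂ) →L[ℂ] (Fin k → ℂ)) 0 := by
      have hsum : HasStrictFDerivAt (fun y => ∑ j ∈ Finset.range N, Fm (e ^ j) y)
          (∑ j ∈ Finset.range N, ContinuousLinearMap.id ℂ (Fin k → ℂ)) 0 :=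
        HasStrictFDerivAt.fun_sum (fun j _ => hstrict j)
      have h2 := hsum.const_smul ((N : ℂ)⁻¹)
      have hderiv : ((N : ℂ)⁻¹ • ∑ j ∈ Finset.range N, ContinuousLinearMap.id ℂ (Fin k → ℂ))
          = (↑(ContinuousLinearEquiv.refl ℂ (Fin k → ℂ)) : (Fin k → ℂ) →L[ℂ] (Fin k → ℂ)) := by
        ext v i
        simp only [ContinuousLinearMap.smul_apply, ContinuousLinearMap.coe_sum',
          Finset.sum_apply, ContinuousLinearMap.id_apply, Finset.sum_const,
          Finset.card_range, ContinuousLinearEquiv.coe_refl, ContinuousLinearEquiv.refl_apply]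
        rw [← Nat.cast_smul_eq_nsmul ℂ, smul_smul, inv_mul_cancel₀
          (by exact_mod_cast hNpos.ne'), one_smul]
      rw [← hderiv]
      exact h2
    set P := havgstrict.toOpenPartialHomeomorph havg with hPdef
    have hPs : (0 : Fin k → ℂ) ∈ P.source := havgstrict.mem_toOpenPartialHomeomorph_source
    -- e ^ N acts trivially
    have heN : ∀ (y) (hy : y ∈ U), Fm (e ^ N) y = y := by
      intro y hy
      rw [hFval (e ^ N) y hy]
      have h1 : ((e ^ N : G) : Equiv.Perm U) ⟨y, hy⟩ = ⟨y, hy⟩ := by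
        rw [SubgroupClass.coe_pow]; exact hord e ⟨y, hy⟩
      rw [h1]
    -- the averaged map is invariant under e
    have hinv : ∀ y ∈ U, havg (Fm e y) = havg y := by
      intro y hy
      have hterm : ∀ j : ℕ, Fm (e ^ j) (Fm e y) = Fm (e ^ (j + 1)) y := by
        intro j
        rw [pow_succ]
        exact (hFcomp (e ^ j) e y hy).symm
      show (N : ℂ)⁻¹ • ∑ j ∈ Finset.range N, Fm (e ^ j) (Fm e y)
          = (N : ℂ)⁻¹ • ∑ j ∈ Finset.range N, Fm (e ^ j) y
      congr 1
      have h1 := Finset.sum_range_succ' (fun j => Fm (e ^ j) y) N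
      have h2 := Finset.sum_range_succ (fun j => Fm (e ^ j) y) N
      have h3 : Fm (e ^ N) y = Fm (e ^ 0) y := by
        rw [heN y hy, pow_zero]
        exact (hFone y).symm
      calc ∑ j ∈ Finset.range N, Fm (e ^ j) (Fm e y)
          = ∑ j ∈ Finset.range N, Fm (e ^ (j + 1)) y := by
            exact Finset.sum_congr rfl (fun j _ => hterm j)
        _ = ∑ j ∈ Finset.range N, Fm (e ^ j) y := by
            have h4 := h1.symm.trans h2
            rw [h3] at h4
            exact add_right_cancel h4
    -- local injectivity gives that e is the identity near 0
    have hcontFe : ContinuousAt (Fm e) 0 := (hAn e 0 h0).continuousAt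
    have hpre : (Fm e) ⁻¹' P.source ∈ 𝓝 (0 : Fin k → ℂ) := by
      apply hcontFe.preimage_mem_nhds
      rw [hF0 e]
      exact P.open_source.mem_nhds hPs
    have hevid : Fm e =ᶠ[𝓝 (0 : Fin k → ℂ)] (fun y => y) := by
      filter_upwards [hUnhds, P.open_source.mem_nhds hPs, hpre] with y hyU hyP hyPre
      exact P.injOn hyPre hyP (hinv y hyU)
    -- identity theorem on the connected set U
    have hglob : Set.EqOn (Fm e) (fun y => y) U :=
      AnalyticOnNhd.eqOn_of_preconnected_of_eventuallyEq
        (fun x hx => hAn e x hx) analyticOnNhd_id hUc.isPreconnected h0 hevid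
    have hone : (e : Equiv.Perm U) = 1 := by
      apply Equiv.ext
      intro x
      apply Subtype.ext
      have h1 : Fm e ↑x = (((e : Equiv.Perm U) ⟨↑x, x.2⟩ : U) : Fin k → ℂ) := hFval e ↑x x.2
      have h2 : Fm e ↑x = ↑x := hglob x.2
      rw [h1] at h2
      simpa using h2
    exact Subtype.ext hone
  -- injectivity of the derivative map
  have hDinj : Function.Injective D := by
    intro g g' hgg'
    have h1 : D (g⁻¹ * g') = ContinuousLinearMap.id ℂ _ := by
      calc D (g⁻¹ * g') = (D g⁻¹).comp (D g') := hDmul _ _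
        _ = (D g⁻¹).comp (D g) := by rw [hgg']
        _ = D (g⁻¹ * g) := (hDmul _ _).symm
        _ = D 1 := by rw [inv_mul_cancel]
        _ = _ := hDone
    have h2 := hker _ h1
    exact (inv_mul_eq_one.mp h2)
  -- finiteness of the set of derivative directions
  have hSfin : ∀ v : Fin k → ℂ, (Set.range fun g : G => D g v).Finite := by
    intro v
    by_contra hfin
    have hinf : (Set.range fun g : G => D g v).Infinite := hfin
    obtain ⟨T, hTsub, hTcard⟩ := hinf.exists_subset_card_eq (ℓ + 1)
    have hch : ∀ w : Fin k → ℂ, ∃ g : G, w ∈ T → D g v = w := by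
      intro w
      by_cases hw : w ∈ T
      · obtain ⟨g, hg⟩ := hTsub (Finset.mem_coe.mpr hw)
        exact ⟨g, fun _ => hg⟩
      · exact ⟨1, fun h => absurd h hw⟩
    choose gs hgs using hch
    -- slope convergence along the line t ↦ t • v
    have hline : ∀ g : G, Filter.Tendsto (fun t : ℂ => t⁻¹ • Fm g (t • v))
        (𝓝[≠] (0 : ℂ)) (𝓝 (D g v)) := by
      intro g
      have h1 : HasDerivAt (fun t : ℂ => t • v) v 0 := by
        simpa using (hasDerivAt_id (0 : ℂ)).smul_const v
      have h2 : HasFDerivAt (Fm g) (D g) ((0 : ℂ) • v) := by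
        rw [zero_smul]; exact hDer g
      have hd : HasDerivAt (fun t : ℂ => Fm g (t • v)) (D g v) 0 := by
        exact h2.comp_hasDerivAt 0 h1
      have h3 := hasDerivAt_iff_tendsto_slope.mp hd
      refine h3.congr (fun t => ?_)
      show slope (fun t : ℂ => Fm g (t • v)) 0 t = t⁻¹ • Fm g (t • v)
      simp [slope, vsub_eq_sub, zero_smul, hF0 g]
    -- the line enters U for small t
    have hmem : ∀ᶠ t : ℂ in 𝓝[≠] 0, t • v ∈ U := by
      have hc : Filter.Tendsto (fun t : ℂ => t • v) (𝓝 0) (𝓝 0) := by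
        have hcont : Continuous fun t : ℂ => t • v := continuous_id.smul continuous_const
        simpa using hcont.tendsto 0
      exact (hc.eventually (hUo.eventually_mem h0)).filter_mono nhdsWithin_le_nhds
    -- eventually two of the chosen elements collide on the line
    have hcol : ∀ᶠ t : ℂ in 𝓝[≠] 0, ∃ q ∈ T ×ˢ T, q.1 ≠ q.2 ∧
        Fm (gs q.1) (t • v) = Fm (gs q.2) (t • v) := by
      filter_upwards [hmem] with t ht
      obtain ⟨w, hw, w', hw', hne, heq⟩ :=
        hpigeon ⟨t • v, ht⟩ T (by rw [hTcard]; exact Nat.lt_succ_self ℓ) gs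
      refine ⟨(w, w'), Finset.mem_product.mpr ⟨hw, hw'⟩, hne, ?_⟩
      rw [hFval (gs w) _ ht, hFval (gs w') _ ht]
      exact congrArg Subtype.val heq
    obtain ⟨q, hqT, hfreq⟩ := exists_frequently_of_eventually_exists (T ×ˢ T) hcol
    obtain ⟨t0, ht0⟩ := hfreq.exists
    have hne : q.1 ≠ q.2 := ht0.1
    have hfreq2 : ∃ᶠ t : ℂ in 𝓝[≠] 0,
        (fun t : ℂ => t⁻¹ • Fm (gs q.1) (t • v)) t
          = (fun t : ℂ => t⁻¹ • Fm (gs q.2) (t • v)) t :=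
      hfreq.mono fun t ht => by
        show t⁻¹ • Fm (gs q.1) (t • v) = t⁻¹ • Fm (gs q.2) (t • v)
        rw [ht.2]
    have heqD : D (gs q.1) v = D (gs q.2) v :=
      tendsto_nhds_unique_of_frequently_eq (hline (gs q.1)) (hline (gs q.2)) hfreq2
    have hq1 : q.1 ∈ T := (Finset.mem_product.mp hqT).1
    have hq2 : q.2 ∈ T := (Finset.mem_product.mp hqT).2
    exact hne (by rw [← hgs q.1 hq1, ← hgs q.2 hq2, heqD])
  -- assemble: G injects into a finite set
  let Ψ : G → (Fin k → (Fin k → ℂ)) := fun g i => D g (Pi.single i 1)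
  have hΨinj : Function.Injective Ψ := by
    intro g g' h
    apply hDinj
    apply ContinuousLinearMap.coe_injective
    apply Module.Basis.ext (Pi.basisFun ℂ (Fin k))
    intro i
    have h2 := congrFun h i
    simpa [Pi.basisFun_apply] using h2
  have hr : (Set.range Ψ).Finite := by
    apply Set.Finite.subset (Set.Finite.pi (fun i => hSfin (Pi.single i 1)))
    rintro _ ⟨g, rfl⟩
    intro i _
    exact ⟨g, rfl⟩
  have := hr.to_subtype
  exact Finite.of_injective (Set.rangeFactorization Ψ)
    (fun a b hab => hΨinj (congrArg Subtype.val hab))
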